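/- For any nonzero δ ∈ ℂ, the bilinear product on the linear span of Pₙ given on diagrams by τ·ρ := δ^{c(τ,ρ)} (τ ∘ ρ) is associative, making the partition algebra 𝐏ₙ(δ) an associative algebra. -/

import Mathlib

open scoped Classical
open Relation
noncomputable section

/-- Vertices of a diagram: `inl` = unprimed points `n̄`, `inr` = primed points `n̄'`. -/
abbrev DVert (n : ℕ) := Fin n ⊕ Fin n

/-- Tripled vertex set used for gluing: bottom (unprimed of the right factor),
middle (identified vertices), top (primed of the left factor). -/
abbrev TVert (n : ℕ) := Fin n ⊕ (Fin n ⊕ Fin n)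

def embBot (n : ℕ) : DVert n → TVert n := Sum.elim Sum.inl (fun i => Sum.inr (Sum.inl i))
def embTop (n : ℕ) : DVert n → TVert n :=
  Sum.elim (fun i => Sum.inr (Sum.inl i)) (fun i => Sum.inr (Sum.inr i))
def embOut (n : ℕ) : DVert n → TVert n := Sum.elim Sum.inl (fun i => Sum.inr (Sum.inr i))

/-- The minimal equivalence relation `χ` on the tripled vertex set containing
(the embedded copies of) `τ` and `ρ`. -/
def glue (n : ℕ) (τ ρ : Setoid (DVert n)) : Setoid (TVert n) :=
  EqvGen.setoid (fun x y =>
    (∃ a b, ρ.r a b ∧ x = embBot n a ∧ y = embBot n b) ∨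
    (∃ a b, τ.r a b ∧ x = embTop n a ∧ y = embTop n b))

/-- Composition `τ ∘ ρ` in the partition monoid: glue and restrict to the outer vertices. -/
def pcomp (n : ℕ) (τ ρ : Setoid (DVert n)) : Setoid (DVert n) where
  r x y := (glue n τ ρ).r (embOut n x) (embOut n y)
  iseqv := ⟨fun _ => (glue n τ ρ).iseqv.refl _, fun h => (glue n τ ρ).iseqv.symm h,
    fun h₁ h₂ => (glue n τ ρ).iseqv.trans h₁ h₂⟩

/-- A middle vertex of the tripled vertex set. -/
def isMiddle {n : ℕ} (x : TVert n) : Prop := ∃ i, x = Sum.inr (Sum.inl i)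

/-- `c(τ,ρ)`: the number of classes of the glued relation contained in the middle row. -/
def ccount (n : ℕ) (τ ρ : Setoid (DVert n)) : ℕ :=
  {C ∈ (glue n τ ρ).classes | ∀ x ∈ C, isMiddle x}.ncard

/-- A propagating part: one meeting both the unprimed and the primed vertices. -/
def IsPropagating {n : ℕ} (C : Set (DVert n)) : Prop :=
  (∃ i, Sum.inl i ∈ C) ∧ (∃ i, Sum.inr i ∈ C)

/-- The rank `r(σ)`: the number of propagating parts of `σ`. -/
def prank (n : ℕ) (σ : Setoid (DVert n)) : ℕ :=
  {C ∈ σ.classes | IsPropagating C}.ncard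

/-- The anti-involution `⋆` swapping primed and unprimed vertices. -/
def pstar (n : ℕ) (σ : Setoid (DVert n)) : Setoid (DVert n) where
  r x y := σ.r x.swap y.swap
  iseqv := ⟨fun _ => σ.iseqv.refl _, fun h => σ.iseqv.symm h,
    fun h₁ h₂ => σ.iseqv.trans h₁ h₂⟩

/-- Minimal unprimed vertex of a part. -/
def minL {n : ℕ} (C : Set (DVert n)) : ℕ :=
  sInf {m : ℕ | ∃ j : Fin n, (j : ℕ) = m ∧ Sum.inl j ∈ C}

/-- Minimal primed vertex of a part. -/
def minR {n : ℕ} (C : Set (DVert n)) : ℕ :=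
  sInf {m : ℕ | ∃ j : Fin n, (j : ℕ) = m ∧ Sum.inr j ∈ C}

/-- Position of a propagating part `C` of `σ` in the ordering (by minimal elements) of the
intersections of the propagating parts with the unprimed vertices. -/
def posL (n : ℕ) (σ : Setoid (DVert n)) (C : Set (DVert n)) : ℕ :=
  {D ∈ σ.classes | IsPropagating D ∧ minL D < minL C}.ncard

/-- Position of a propagating part `C` of `σ` in the ordering (by minimal elements) of the
intersections of the propagating parts with the primed vertices. -/
def posR (n : ℕ) (σ : Setoid (DVert n)) (C : Set (DVert n)) : ℕ :=
  {D ∈ σ.classes | IsPropagating D ∧ minR D < minR C}.ncard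

/-- The permutation `π_σ ∈ S_k` recording how propagating lines connect the two sides of `σ`
(for a diagram of rank `k`): the unique permutation sending the position of a propagating part
on the unprimed side to its position on the primed side. -/
def permAt (n k : ℕ) (σ : Setoid (DVert n)) : Equiv.Perm (Fin k) :=
  Classical.epsilon (fun π : Equiv.Perm (Fin k) =>
    ∀ C ∈ σ.classes, IsPropagating C → ∀ h : posL n σ C < k,
      ((π ⟨posL n σ C, h⟩ : Fin k) : ℕ) = posR n σ C)

/-- The product of the partition algebra `𝐏ₙ(δ)` on the free vector space on diagrams. -/
def pmul (n : ℕ) (δ : ℂ) (f g : Setoid (DVert n) →₀ ℂ) : Setoid (DVert n) →₀ ℂ :=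
  f.sum fun τ a => g.sum fun ρ b =>
    Finsupp.single (pcomp n τ ρ) (δ ^ ccount n τ ρ * (a * b))

/-- `i(π,s)`: the number of pairs `i < j` with `s i = j` and `π i > π j`. -/
def icount (n : ℕ) (π s : Equiv.Perm (Fin n)) : ℕ :=
  (Finset.univ.filter fun p : Fin n × Fin n => p.1 < p.2 ∧ s p.1 = p.2 ∧ π p.2 < π p.1).card


-- ===== aux =====
abbrev QV (n : ℕ) := Fin n ⊕ (Fin n ⊕ (Fin n ⊕ Fin n))
def q0 {n : ℕ} (i : Fin n) : QV n := .inl i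
def q1 {n : ℕ} (i : Fin n) : QV n := .inr (.inl i)
def q2 {n : ℕ} (i : Fin n) : QV n := .inr (.inr (.inl i))
def q3 {n : ℕ} (i : Fin n) : QV n := .inr (.inr (.inr i))
def e01 (n : ℕ) : DVert n → QV n := Sum.elim q0 q1
def e12 (n : ℕ) : DVert n → QV n := Sum.elim q1 q2
def e23 (n : ℕ) : DVert n → QV n := Sum.elim q2 q3
def eOut (n : ℕ) : DVert n → QV n := Sum.elim q0 q3
def FL (n : ℕ) : TVert n → QV n := Sum.elim q0 (Sum.elim q1 q3)
def FU (n : ℕ) : TVert n → QV n := Sum.elim q1 (Sum.elim q2 q3)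

def gq (n : ℕ) (τ ρ σ : Setoid (DVert n)) : Setoid (QV n) :=
  EqvGen.setoid (fun x y =>
    (∃ a b, σ.r a b ∧ x = e01 n a ∧ y = e01 n b) ∨
    (∃ a b, ρ.r a b ∧ x = e12 n a ∧ y = e12 n b) ∨
    (∃ a b, τ.r a b ∧ x = e23 n a ∧ y = e23 n b))

lemma glue_rel_bot {n : ℕ} {τ ρ : Setoid (DVert n)} {a b : DVert n} (h : ρ.r a b) :
    (glue n τ ρ).r (embBot n a) (embBot n b) :=
  EqvGen.rel _ _ (Or.inl ⟨a, b, h, rfl, rfl⟩)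

lemma glue_rel_top {n : ℕ} {τ ρ : Setoid (DVert n)} {a b : DVert n} (h : τ.r a b) :
    (glue n τ ρ).r (embTop n a) (embTop n b) :=
  EqvGen.rel _ _ (Or.inr ⟨a, b, h, rfl, rfl⟩)

lemma up_le {n : ℕ} {τ ρ σ : Setoid (DVert n)} {s t : TVert n}
    (h : (glue n τ ρ).r s t) : (gq n τ ρ σ).r (FU n s) (FU n t) := by
  induction h with
  | rel x y hxy =>
    refine EqvGen.rel _ _ ?_
    rcases hxy with ⟨a, b, hab, rfl, rfl⟩ | ⟨a, b, hab, rfl, rfl⟩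
    · exact Or.inr (Or.inl ⟨a, b, hab, by cases a <;> rfl, by cases b <;> rfl⟩)
    · exact Or.inr (Or.inr ⟨a, b, hab, by cases a <;> rfl, by cases b <;> rfl⟩)
  | refl x => exact EqvGen.refl _
  | symm x y _ ih => exact EqvGen.symm _ _ ih
  | trans x y z _ _ ih1 ih2 => exact EqvGen.trans _ _ _ ih1 ih2

lemma low_le {n : ℕ} {τ ρ σ : Setoid (DVert n)} {x y : TVert n}
    (h : (glue n (pcomp n τ ρ) σ).r x y) : (gq n τ ρ σ).r (FL n x) (FL n y) := by
  induction h with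
  | rel x y hxy =>
    rcases hxy with ⟨a, b, hab, rfl, rfl⟩ | ⟨a, b, hab, rfl, rfl⟩
    · exact EqvGen.rel _ _ (Or.inl ⟨a, b, hab, by cases a <;> rfl, by cases b <;> rfl⟩)
    · have := up_le (σ := σ) hab
      have e1 : FU n (embOut n a) = FL n (embTop n a) := by cases a <;> rfl
      have e2 : FU n (embOut n b) = FL n (embTop n b) := by cases b <;> rfl
      rwa [e1, e2] at this
  | refl x => exact EqvGen.refl _
  | symm x y _ ih => exact EqvGen.symm _ _ ih
  | trans x y z _ _ ih1 ih2 => exact EqvGen.trans _ _ _ ih1 ih2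

def mid {n : ℕ} (i : Fin n) : TVert n := Sum.inr (Sum.inl i)
def topv {n : ℕ} (i : Fin n) : TVert n := Sum.inr (Sum.inr i)

def linked (n : ℕ) (τ ρ : Setoid (DVert n)) (i : Fin n) : Prop :=
  ∃ w : DVert n, (glue n τ ρ).r (mid i) (embOut n w)

lemma pcomp_of_out {n : ℕ} {τ ρ : Setoid (DVert n)} {a b : DVert n}
    (h : (glue n τ ρ).r (embOut n a) (embOut n b)) : (pcomp n τ ρ).r a b := h

lemma Egen {n : ℕ} {τ ρ σ : Setoid (DVert n)} {a b : DVert n}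
    (h : (glue n τ ρ).r (embOut n a) (embOut n b)) :
    (glue n (pcomp n τ ρ) σ).r (embTop n a) (embTop n b) :=
  glue_rel_top h

def phi (n : ℕ) (τ ρ σ : Setoid (DVert n)) : QV n →
    Quotient (glue n (pcomp n τ ρ) σ) ⊕ Quotient (glue n τ ρ) := fun u =>
  match u with
  | .inl i => .inl ⟦(Sum.inl i : TVert n)⟧
  | .inr (.inl i) => .inl ⟦(mid i : TVert n)⟧
  | .inr (.inr (.inr i)) => .inl ⟦(topv i : TVert n)⟧
  | .inr (.inr (.inl i)) =>
      if h : linked n τ ρ i then .inl ⟦embTop n h.choose⟧ else .inr ⟦(mid i : TVert n)⟧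

lemma phi_FL {n : ℕ} (τ ρ σ : Setoid (DVert n)) (x : TVert n) :
    phi n τ ρ σ (FL n x) = .inl ⟦x⟧ := by
  rcases x with i | i | i <;> rfl

lemma phi_q2_linked {n : ℕ} (τ ρ σ : Setoid (DVert n)) {i : Fin n} {w : DVert n}
    (hw : (glue n τ ρ).r (mid i) (embOut n w)) :
    phi n τ ρ σ (q2 i) = .inl ⟦embTop n w⟧ := by
  have h : linked n τ ρ i := ⟨w, hw⟩
  show (if h' : linked n τ ρ i then _ else _) = _
  rw [dif_pos h]
  have h2 : (glue n τ ρ).r (embOut n h.choose) (embOut n w) :=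
    (glue n τ ρ).iseqv.trans ((glue n τ ρ).iseqv.symm h.choose_spec) hw
  exact congrArg Sum.inl (Quot.sound (Egen h2))

lemma phi_q2_not_linked {n : ℕ} (τ ρ σ : Setoid (DVert n)) {i : Fin n}
    (h : ¬ linked n τ ρ i) : phi n τ ρ σ (q2 i) = .inr ⟦(mid i : TVert n)⟧ := by
  show (if h' : linked n τ ρ i then _ else _) = _
  rw [dif_neg h]

lemma phi_mid_congr {n : ℕ} (τ ρ σ : Setoid (DVert n)) {i j : Fin n}
    (h : (glue n τ ρ).r (mid i) (mid j)) : phi n τ ρ σ (q2 i) = phi n τ ρ σ (q2 j) := by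
  by_cases hl : linked n τ ρ i
  · obtain ⟨w, hw⟩ := hl
    rw [phi_q2_linked τ ρ σ hw,
      phi_q2_linked τ ρ σ ((glue n τ ρ).iseqv.trans ((glue n τ ρ).iseqv.symm h) hw)]
  · have hl' : ¬ linked n τ ρ j := fun ⟨w, hw⟩ => hl ⟨w, (glue n τ ρ).iseqv.trans h hw⟩
    rw [phi_q2_not_linked τ ρ σ hl, phi_q2_not_linked τ ρ σ hl']
    exact congrArg Sum.inr (Quot.sound h)

lemma phi_const {n : ℕ} {τ ρ σ : Setoid (DVert n)} {u v : QV n}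
    (h : (gq n τ ρ σ).r u v) : phi n τ ρ σ u = phi n τ ρ σ v := by
  induction h with
  | rel x y hxy =>
    rcases hxy with ⟨a, b, hab, rfl, rfl⟩ | ⟨a, b, hab, rfl, rfl⟩ | ⟨a, b, hab, rfl, rfl⟩
    · -- σ generator
      have e1 : e01 n a = FL n (embBot n a) := by cases a <;> rfl
      have e2 : e01 n b = FL n (embBot n b) := by cases b <;> rfl
      rw [e1, e2, phi_FL, phi_FL]
      exact congrArg Sum.inl (Quot.sound (glue_rel_bot hab))
    · -- ρ generator
      have hg : (glue n τ ρ).r (embBot n a) (embBot n b) := glue_rel_bot hab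
      rcases a with i | i <;> rcases b with j | j
      · -- q1 i , q1 j
        show phi n τ ρ σ (FL n (mid i)) = phi n τ ρ σ (FL n (mid j))
        rw [phi_FL, phi_FL]
        have hg' : (glue n τ ρ).r (embOut n (Sum.inl i)) (embOut n (Sum.inl j)) := hg
        exact congrArg Sum.inl (Quot.sound (Egen hg'))
      · -- q1 i , q2 j
        have : (glue n τ ρ).r (mid j) (embOut n (Sum.inl i)) := (glue n τ ρ).iseqv.symm hg
        show phi n τ ρ σ (FL n (mid i)) = phi n τ ρ σ (q2 j)
        rw [phi_FL, phi_q2_linked τ ρ σ this]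
        rfl
      · have : (glue n τ ρ).r (mid i) (embOut n (Sum.inl j)) := hg
        show phi n τ ρ σ (q2 i) = phi n τ ρ σ (FL n (mid j))
        rw [phi_FL, phi_q2_linked τ ρ σ this]
        rfl
      · exact phi_mid_congr τ ρ σ hg
    · -- τ generator
      have hg : (glue n τ ρ).r (embTop n a) (embTop n b) := glue_rel_top hab
      rcases a with i | i <;> rcases b with j | j
      · exact phi_mid_congr τ ρ σ hg
      · have : (glue n τ ρ).r (mid i) (embOut n (Sum.inr j)) := hg
        show phi n τ ρ σ (q2 i) = phi n τ ρ σ (FL n (topv j))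
        rw [phi_FL, phi_q2_linked τ ρ σ this]
        rfl
      · have : (glue n τ ρ).r (mid j) (embOut n (Sum.inr i)) := (glue n τ ρ).iseqv.symm hg
        show phi n τ ρ σ (FL n (topv i)) = phi n τ ρ σ (q2 j)
        rw [phi_FL, phi_q2_linked τ ρ σ this]
        rfl
      · show phi n τ ρ σ (FL n (topv i)) = phi n τ ρ σ (FL n (topv j))
        rw [phi_FL, phi_FL]
        have hg' : (glue n τ ρ).r (embOut n (Sum.inr i)) (embOut n (Sum.inr j)) := hg
        exact congrArg Sum.inl (Quot.sound (Egen hg'))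
  | refl x => rfl
  | symm _ _ _ ih => exact ih.symm
  | trans _ _ _ _ _ ih1 ih2 => exact ih1.trans ih2

lemma low_iff {n : ℕ} (τ ρ σ : Setoid (DVert n)) (x y : TVert n) :
    (glue n (pcomp n τ ρ) σ).r x y ↔ (gq n τ ρ σ).r (FL n x) (FL n y) := by
  refine ⟨low_le, fun h => ?_⟩
  have := phi_const h
  rw [phi_FL, phi_FL] at this
  exact Quotient.exact (Sum.inl.inj this)

def row1 {n : ℕ} (u : QV n) : Prop := ∃ i, u = q1 i
def row2 {n : ℕ} (u : QV n) : Prop := ∃ i, u = q2 i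
def row12 {n : ℕ} (u : QV n) : Prop := row1 u ∨ row2 u

def Mgq (n : ℕ) (τ ρ σ : Setoid (DVert n)) : ℕ :=
  {C ∈ (gq n τ ρ σ).classes | ∀ x ∈ C, row12 x}.ncard

lemma FU_inj {n : ℕ} : Function.Injective (FU n) := by
  rintro (i|i|i) (j|j|j) h <;> simp [FU, q1, q2, q3] at h <;> simp [h]

lemma class_eq_of_mem {α : Type*} {S : Setoid α} {C : Set α} (hC : C ∈ S.classes) {x : α}
    (hx : x ∈ C) : C = {y | S.r y x} :=
  Setoid.eq_of_mem_classes hC hx (S.mem_classes x) (S.iseqv.refl x)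

lemma mem_FU_mid {n : ℕ} {D : Set (TVert n)} (hmid : ∀ s ∈ D, isMiddle s) {u : QV n} :
    u ∈ FU n '' D ↔ ∃ k, u = q2 k ∧ mid k ∈ D := by
  constructor
  · rintro ⟨s, hs, rfl⟩
    obtain ⟨k, rfl⟩ := hmid s hs
    exact ⟨k, rfl, hs⟩
  · rintro ⟨k, rfl, hk⟩
    exact ⟨mid k, hk, rfl⟩

lemma invariance {n : ℕ} {τ ρ σ : Setoid (DVert n)} {D : Set (TVert n)}
    (hD : D ∈ (glue n τ ρ).classes) (hmid : ∀ s ∈ D, isMiddle s) {u v : QV n}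
    (h : (gq n τ ρ σ).r u v) : u ∈ FU n '' D ↔ v ∈ FU n '' D := by
  obtain ⟨y0, rfl⟩ := hD
  have hcl : ∀ s ∈ {x | (glue n τ ρ).r x y0}, ∀ t, (glue n τ ρ).r s t →
      t ∈ {x | (glue n τ ρ).r x y0} := fun s hs t ht =>
    (glue n τ ρ).iseqv.trans ((glue n τ ρ).iseqv.symm ht) hs
  set D := {x | (glue n τ ρ).r x y0} with hDdef
  clear_value D
  induction h with
  | rel x y hxy =>
    rcases hxy with ⟨a, b, hab, rfl, rfl⟩ | ⟨a, b, hab, rfl, rfl⟩ | ⟨a, b, hab, rfl, rfl⟩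
    · -- σ generator: both not in middle image
      rw [mem_FU_mid hmid, mem_FU_mid hmid]
      constructor
      · rintro ⟨k, hk, -⟩; rcases a with i | i <;> simp [e01, q0, q1, q2] at hk
      · rintro ⟨k, hk, -⟩; rcases b with i | i <;> simp [e01, q0, q1, q2] at hk
    · -- ρ generator
      rw [mem_FU_mid hmid, mem_FU_mid hmid]
      constructor
      · rintro ⟨k, hk, hmem⟩
        rcases a with i | i <;> simp [e12, q1, q2] at hk
        subst hk
        have hb : embBot n b ∈ D := hcl _ hmem _ (glue_rel_bot hab)
        obtain ⟨j, hj⟩ := hmid _ hb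
        rcases b with j' | j' <;> simp [embBot] at hj
        subst hj
        exact ⟨j', rfl, hb⟩
      · rintro ⟨k, hk, hmem⟩
        rcases b with i | i <;> simp [e12, q1, q2] at hk
        subst hk
        have hb : embBot n a ∈ D := hcl _ hmem _ (glue_rel_bot ((ρ.iseqv.symm) hab))
        obtain ⟨j, hj⟩ := hmid _ hb
        rcases a with j' | j' <;> simp [embBot] at hj
        subst hj
        exact ⟨j', rfl, hb⟩
    · -- τ generator
      rw [mem_FU_mid hmid, mem_FU_mid hmid]
      constructor
      · rintro ⟨k, hk, hmem⟩
        rcases a with i | i <;> simp [e23, q2, q3] at hk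
        subst hk
        have hb : embTop n b ∈ D := hcl _ hmem _ (glue_rel_top hab)
        obtain ⟨j, hj⟩ := hmid _ hb
        rcases b with j' | j' <;> simp [embTop] at hj
        subst hj
        exact ⟨j', rfl, hb⟩
      · rintro ⟨k, hk, hmem⟩
        rcases b with i | i <;> simp [e23, q2, q3] at hk
        subst hk
        have hb : embTop n a ∈ D := hcl _ hmem _ (glue_rel_top ((τ.iseqv.symm) hab))
        obtain ⟨j, hj⟩ := hmid _ hb
        rcases a with j' | j' <;> simp [embTop] at hj
        subst hj
        exact ⟨j', rfl, hb⟩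
  | refl x => exact Iff.rfl
  | symm _ _ _ ih => exact ih.symm
  | trans _ _ _ _ _ ih1 ih2 => exact ih1.trans ih2

lemma not_row12_q0 {n : ℕ} (i : Fin n) : ¬ row12 (q0 i) := by
  rintro (⟨j, h⟩ | ⟨j, h⟩) <;> simp [q0, q1, q2] at h
lemma not_row12_q3 {n : ℕ} (i : Fin n) : ¬ row12 (q3 i) := by
  rintro (⟨j, h⟩ | ⟨j, h⟩) <;> simp [q3, q1, q2] at h
lemma not_row2_q1 {n : ℕ} (i : Fin n) : ¬ row2 (q1 i) := by
  rintro ⟨j, h⟩; simp [q1, q2] at h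

section CountLeft
variable {n : ℕ} (τ ρ σ : Setoid (DVert n))

/-- classes of the big gluing contained in rows 1-2 and meeting row 1 -/
def A1 : Set (Set (QV n)) :=
  {C | C ∈ (gq n τ ρ σ).classes ∧ (∀ x ∈ C, row12 x) ∧ ∃ i, q1 i ∈ C}
/-- classes of the big gluing contained in row 2 -/
def A2 : Set (Set (QV n)) :=
  {C | C ∈ (gq n τ ρ σ).classes ∧ ∀ x ∈ C, row2 x}

lemma middle_eq_A1_image :
    {C ∈ (glue n (pcomp n τ ρ) σ).classes | ∀ x ∈ C, isMiddle x} =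
      (fun C => FL n ⁻¹' C) '' A1 τ ρ σ := by
  ext D
  constructor
  · rintro ⟨⟨y0, rfl⟩, hmidD⟩
    obtain ⟨i0, rfl⟩ := hmidD y0 ((glue n (pcomp n τ ρ) σ).iseqv.refl y0)
    refine ⟨{u | (gq n τ ρ σ).r u (q1 i0)}, ⟨(gq n τ ρ σ).mem_classes _, ?_, i0,
      (gq n τ ρ σ).iseqv.refl _⟩, ?_⟩
    · rintro (j | j | j | j) hu
      · exact absurd ((low_iff τ ρ σ (Sum.inl j) (mid i0)).2 hu) (by
          intro hE
          obtain ⟨k, hk⟩ := hmidD _ hE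
          simp [mid] at hk)
      · exact Or.inl ⟨j, rfl⟩
      · exact Or.inr ⟨j, rfl⟩
      · exact absurd ((low_iff τ ρ σ (topv j) (mid i0)).2 hu) (by
          intro hE
          obtain ⟨k, hk⟩ := hmidD _ hE
          simp [topv, mid] at hk)
    · ext x
      exact ((low_iff τ ρ σ x (mid i0)).symm : _ ↔ _)
  · rintro ⟨C, ⟨hC, hrow, i0, hi0⟩, rfl⟩
    have hCeq : C = {u | (gq n τ ρ σ).r u (q1 i0)} := class_eq_of_mem hC hi0
    subst hCeq
    have hpre : FL n ⁻¹' {u | (gq n τ ρ σ).r u (q1 i0)} =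
        {x | (glue n (pcomp n τ ρ) σ).r x (mid i0)} := by
      ext x; exact ((low_iff τ ρ σ x (mid i0)).symm : _ ↔ _)
    show FL n ⁻¹' {u | (gq n τ ρ σ).r u (q1 i0)} ∈ _
    rw [hpre]
    refine ⟨(glue n (pcomp n τ ρ) σ).mem_classes _, ?_⟩
    intro x hx
    have hmem : FL n x ∈ {u | (gq n τ ρ σ).r u (q1 i0)} := (low_iff τ ρ σ x (mid i0)).1 hx
    have := hrow _ hmem
    rcases x with j | j | j
    · exact absurd this (not_row12_q0 j)
    · exact ⟨j, rfl⟩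
    · exact absurd this (not_row12_q3 j)

lemma A1_injOn : Set.InjOn (fun C => FL n ⁻¹' C) (A1 τ ρ σ) := by
  rintro C ⟨hC, -, i0, hi0⟩ C' ⟨hC', -, -⟩ hpre
  have hpre' : FL n ⁻¹' C = FL n ⁻¹' C' := hpre
  have h1 : mid i0 ∈ FL n ⁻¹' C := hi0
  rw [hpre'] at h1
  exact Setoid.eq_of_mem_classes hC hi0 hC' h1

lemma middle_eq_A2_image :
    {C ∈ (glue n τ ρ).classes | ∀ x ∈ C, isMiddle x} =
      (fun C => FU n ⁻¹' C) '' A2 τ ρ σ := by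
  ext D
  constructor
  · rintro ⟨⟨y0, rfl⟩, hmidD⟩
    obtain ⟨a, rfl⟩ := hmidD y0 ((glue n τ ρ).iseqv.refl y0)
    set D := {x | (glue n τ ρ).r x (mid a)} with hDdef
    have hDcl : D ∈ (glue n τ ρ).classes := (glue n τ ρ).mem_classes _
    have hq2 : q2 a ∈ FU n '' D := ⟨mid a, (glue n τ ρ).iseqv.refl _, rfl⟩
    refine ⟨{u | (gq n τ ρ σ).r u (q2 a)}, ⟨(gq n τ ρ σ).mem_classes _, ?_⟩, ?_⟩
    · intro u hu
      have := (invariance hDcl hmidD (hu : (gq n τ ρ σ).r u (q2 a))).2 hq2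
      obtain ⟨k, hk, -⟩ := (mem_FU_mid hmidD).1 this
      exact ⟨k, hk⟩
    · ext t
      constructor
      · intro ht
        have := (invariance hDcl hmidD (ht : (gq n τ ρ σ).r (FU n t) (q2 a))).2 hq2
        obtain ⟨s, hs, hst⟩ := this
        exact (FU_inj hst) ▸ hs
      · intro ht
        exact (up_le (σ := σ) ht : (gq n τ ρ σ).r (FU n t) (q2 a))
  · rintro ⟨C, ⟨hC, hrow⟩, rfl⟩
    obtain ⟨y0, rfl⟩ := hC
    obtain ⟨a, rfl⟩ : ∃ i, y0 = q2 i := hrow y0 ((gq n τ ρ σ).iseqv.refl y0)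
    set D := {x | (glue n τ ρ).r x (mid a)} with hDdef
    have hDcl : D ∈ (glue n τ ρ).classes := (glue n τ ρ).mem_classes _
    have hDmid : ∀ s ∈ D, isMiddle s := by
      intro s hs
      have hFU : FU n s ∈ {u | (gq n τ ρ σ).r u (q2 a)} :=
        (up_le (σ := σ) hs : (gq n τ ρ σ).r (FU n s) (q2 a))
      obtain ⟨k, hk⟩ := hrow _ hFU
      rcases s with j | j | j
      · simp [FU, q1, q2] at hk
      · exact ⟨j, rfl⟩
      · simp [FU, q3, q2] at hk
    have hq2 : q2 a ∈ FU n '' D := ⟨mid a, (glue n τ ρ).iseqv.refl _, rfl⟩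
    have hpre : FU n ⁻¹' {u | (gq n τ ρ σ).r u (q2 a)} = D := by
      ext t
      constructor
      · intro ht
        have := (invariance hDcl hDmid (ht : (gq n τ ρ σ).r (FU n t) (q2 a))).2 hq2
        obtain ⟨s, hs, hst⟩ := this
        exact (FU_inj hst) ▸ hs
      · intro ht
        exact (up_le (σ := σ) ht : (gq n τ ρ σ).r (FU n t) (q2 a))
    show FU n ⁻¹' {u | (gq n τ ρ σ).r u (q2 a)} ∈ _
    rw [hpre]
    exact ⟨hDcl, hDmid⟩

lemma A2_injOn : Set.InjOn (fun C => FU n ⁻¹' C) (A2 τ ρ σ) := by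
  rintro C ⟨hC, hrow⟩ C' ⟨hC', -⟩ hpre
  have hC2 := hC
  obtain ⟨y0, hy0⟩ := hC2
  have hy0mem : y0 ∈ C := hy0 ▸ ((gq n τ ρ σ).iseqv.refl y0)
  obtain ⟨a, ha⟩ := hrow y0 hy0mem
  have hq2C : q2 a ∈ C := ha ▸ hy0mem
  have h1 : mid a ∈ FU n ⁻¹' C := hq2C
  have hpre' : FU n ⁻¹' C = FU n ⁻¹' C' := hpre
  rw [hpre'] at h1
  exact Setoid.eq_of_mem_classes hC hq2C hC' h1

lemma count_left : ccount n (pcomp n τ ρ) σ + ccount n τ ρ = Mgq n τ ρ σ := by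
  have h1 : ccount n (pcomp n τ ρ) σ = (A1 τ ρ σ).ncard := by
    rw [ccount, middle_eq_A1_image, Set.ncard_image_of_injOn (A1_injOn τ ρ σ)]
  have h2 : ccount n τ ρ = (A2 τ ρ σ).ncard := by
    rw [ccount, middle_eq_A2_image τ ρ σ, Set.ncard_image_of_injOn (A2_injOn τ ρ σ)]
  have hunion : {C ∈ (gq n τ ρ σ).classes | ∀ x ∈ C, row12 x} = A1 τ ρ σ ∪ A2 τ ρ σ := by
    ext C
    constructor
    · rintro ⟨hC, hrow⟩
      by_cases hq : ∃ i, q1 i ∈ C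
      · exact Or.inl ⟨hC, hrow, hq⟩
      · refine Or.inr ⟨hC, fun x hx => ?_⟩
        rcases hrow x hx with ⟨i, rfl⟩ | h2
        · exact absurd ⟨i, hx⟩ hq
        · exact h2
    · rintro (⟨hC, hrow, -⟩ | ⟨hC, hrow⟩)
      · exact ⟨hC, hrow⟩
      · exact ⟨hC, fun x hx => Or.inr (hrow x hx)⟩
  have hdisj : Disjoint (A1 τ ρ σ) (A2 τ ρ σ) := by
    rw [Set.disjoint_left]
    rintro C ⟨-, -, i, hi⟩ ⟨-, hrow⟩
    exact not_row2_q1 i (hrow _ hi)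
  rw [h1, h2, Mgq, hunion, Set.ncard_union_eq hdisj (Set.toFinite _) (Set.toFinite _)]

end CountLeft

lemma pstar_pstar {n : ℕ} (σ : Setoid (DVert n)) : pstar n (pstar n σ) = σ := by
  apply Setoid.ext
  intro x y
  show σ.r x.swap.swap y.swap.swap ↔ σ.r x y
  rw [Sum.swap_swap, Sum.swap_swap]

def tflip (n : ℕ) : TVert n → TVert n :=
  Sum.elim (fun i => Sum.inr (Sum.inr i)) (Sum.elim (fun i => Sum.inr (Sum.inl i)) Sum.inl)

def qflip (n : ℕ) : QV n → QV n :=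
  Sum.elim q3 (Sum.elim q2 (Sum.elim q1 q0))

lemma tflip_tflip {n : ℕ} (x : TVert n) : tflip n (tflip n x) = x := by
  rcases x with i | i | i <;> rfl

lemma qflip_qflip {n : ℕ} (u : QV n) : qflip n (qflip n u) = u := by
  rcases u with i | i | i | i <;> rfl

lemma glue_flip_le {n : ℕ} {τ ρ : Setoid (DVert n)} {s t : TVert n}
    (h : (glue n τ ρ).r s t) :
    (glue n (pstar n ρ) (pstar n τ)).r (tflip n s) (tflip n t) := by
  induction h with
  | rel x y hxy =>
    refine EqvGen.rel _ _ ?_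
    rcases hxy with ⟨a, b, hab, rfl, rfl⟩ | ⟨a, b, hab, rfl, rfl⟩
    · refine Or.inr ⟨a.swap, b.swap, ?_, by cases a <;> rfl, by cases b <;> rfl⟩
      show ρ.r a.swap.swap b.swap.swap
      rwa [Sum.swap_swap, Sum.swap_swap]
    · refine Or.inl ⟨a.swap, b.swap, ?_, by cases a <;> rfl, by cases b <;> rfl⟩
      show τ.r a.swap.swap b.swap.swap
      rwa [Sum.swap_swap, Sum.swap_swap]
  | refl x => exact EqvGen.refl _
  | symm x y _ ih => exact EqvGen.symm _ _ ih
  | trans x y z _ _ ih1 ih2 => exact EqvGen.trans _ _ _ ih1 ih2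

lemma glue_flip {n : ℕ} (τ ρ : Setoid (DVert n)) (s t : TVert n) :
    (glue n τ ρ).r s t ↔ (glue n (pstar n ρ) (pstar n τ)).r (tflip n s) (tflip n t) := by
  refine ⟨glue_flip_le, fun h => ?_⟩
  have := glue_flip_le h
  rwa [tflip_tflip, tflip_tflip, pstar_pstar, pstar_pstar] at this

lemma pstar_pcomp {n : ℕ} (τ ρ : Setoid (DVert n)) :
    pstar n (pcomp n τ ρ) = pcomp n (pstar n ρ) (pstar n τ) := by
  apply Setoid.ext
  intro x y
  show (glue n τ ρ).r (embOut n x.swap) (embOut n y.swap) ↔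
    (glue n (pstar n ρ) (pstar n τ)).r (embOut n x) (embOut n y)
  rw [glue_flip]
  have e1 : tflip n (embOut n x.swap) = embOut n x := by cases x <;> rfl
  have e2 : tflip n (embOut n y.swap) = embOut n y := by cases y <;> rfl
  rw [e1, e2]

lemma classes_ncard_congr {α β : Type*} (e : α ≃ β) (S : Setoid α) (S' : Setoid β)
    (he : ∀ x y, S.r x y ↔ S'.r (e x) (e y)) (P : α → Prop) (P' : β → Prop)
    (hP : ∀ x, P x ↔ P' (e x)) :
    {C ∈ S.classes | ∀ x ∈ C, P x}.ncard = {C ∈ S'.classes | ∀ x ∈ C, P' x}.ncard := by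
  have himg : {C ∈ S'.classes | ∀ x ∈ C, P' x} =
      (Set.image e) '' {C ∈ S.classes | ∀ x ∈ C, P x} := by
    ext C'
    constructor
    · rintro ⟨⟨y', rfl⟩, hPC⟩
      refine ⟨{x | S.r x (e.symm y')}, ⟨S.mem_classes _, ?_⟩, ?_⟩
      · intro x hx
        rw [hP]
        exact hPC (e x) (by
          show S'.r (e x) y'
          have := (he x (e.symm y')).1 hx
          rwa [e.apply_symm_apply] at this)
      · ext b
        constructor
        · rintro ⟨x, hx, rfl⟩
          have := (he x (e.symm y')).1 hx
          rwa [e.apply_symm_apply] at this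
        · intro hb
          refine ⟨e.symm b, ?_, e.apply_symm_apply b⟩
          show S.r (e.symm b) (e.symm y')
          rw [he, e.apply_symm_apply, e.apply_symm_apply]
          exact hb
    · rintro ⟨C, ⟨⟨y, rfl⟩, hPC⟩, rfl⟩
      constructor
      · refine ⟨e y, ?_⟩
        ext b
        constructor
        · rintro ⟨x, hx, rfl⟩
          exact (he x y).1 hx
        · intro hb
          refine ⟨e.symm b, ?_, e.apply_symm_apply b⟩
          show S.r (e.symm b) y
          rw [he, e.apply_symm_apply]
          exact hb
      · rintro b ⟨x, hx, rfl⟩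
        rw [← hP]
        exact hPC x hx
  rw [himg, Set.ncard_image_of_injective _ (Set.image_injective.2 e.injective)]

def tflipEquiv (n : ℕ) : TVert n ≃ TVert n := ⟨tflip n, tflip n, tflip_tflip, tflip_tflip⟩
def qflipEquiv (n : ℕ) : QV n ≃ QV n := ⟨qflip n, qflip n, qflip_qflip, qflip_qflip⟩

lemma ccount_star {n : ℕ} (τ ρ : Setoid (DVert n)) :
    ccount n τ ρ = ccount n (pstar n ρ) (pstar n τ) := by
  refine classes_ncard_congr (tflipEquiv n) _ _ (fun x y => glue_flip τ ρ x y) _ _ ?_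
  rintro (i | i | i) <;> simp [tflipEquiv, tflip, isMiddle]

lemma gq_flip_le {n : ℕ} {τ ρ σ : Setoid (DVert n)} {u v : QV n}
    (h : (gq n τ ρ σ).r u v) :
    (gq n (pstar n σ) (pstar n ρ) (pstar n τ)).r (qflip n u) (qflip n v) := by
  induction h with
  | rel x y hxy =>
    refine EqvGen.rel _ _ ?_
    rcases hxy with ⟨a, b, hab, rfl, rfl⟩ | ⟨a, b, hab, rfl, rfl⟩ | ⟨a, b, hab, rfl, rfl⟩
    · refine Or.inr (Or.inr ⟨a.swap, b.swap, ?_, by cases a <;> rfl, by cases b <;> rfl⟩)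
      show σ.r a.swap.swap b.swap.swap
      rwa [Sum.swap_swap, Sum.swap_swap]
    · refine Or.inr (Or.inl ⟨a.swap, b.swap, ?_, by cases a <;> rfl, by cases b <;> rfl⟩)
      show ρ.r a.swap.swap b.swap.swap
      rwa [Sum.swap_swap, Sum.swap_swap]
    · refine Or.inl ⟨a.swap, b.swap, ?_, by cases a <;> rfl, by cases b <;> rfl⟩
      show τ.r a.swap.swap b.swap.swap
      rwa [Sum.swap_swap, Sum.swap_swap]
  | refl x => exact EqvGen.refl _
  | symm x y _ ih => exact EqvGen.symm _ _ ih
  | trans x y z _ _ ih1 ih2 => exact EqvGen.trans _ _ _ ih1 ih2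

lemma gq_flip {n : ℕ} (τ ρ σ : Setoid (DVert n)) (u v : QV n) :
    (gq n τ ρ σ).r u v ↔
      (gq n (pstar n σ) (pstar n ρ) (pstar n τ)).r (qflip n u) (qflip n v) := by
  refine ⟨gq_flip_le, fun h => ?_⟩
  have := gq_flip_le h
  rwa [qflip_qflip, qflip_qflip, pstar_pstar, pstar_pstar, pstar_pstar] at this

lemma Mgq_flip {n : ℕ} (τ ρ σ : Setoid (DVert n)) :
    Mgq n τ ρ σ = Mgq n (pstar n σ) (pstar n ρ) (pstar n τ) := by
  refine classes_ncard_congr (qflipEquiv n) _ _ (fun u v => gq_flip τ ρ σ u v) _ _ ?_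
  rintro (i | i | i | i) <;>
    simp [qflipEquiv, qflip, row12, row1, row2, q0, q1, q2, q3]

lemma out_iff {n : ℕ} (τ ρ σ : Setoid (DVert n)) (x y : DVert n) :
    (pcomp n (pcomp n τ ρ) σ).r x y ↔ (gq n τ ρ σ).r (eOut n x) (eOut n y) := by
  have e1 : FL n (embOut n x) = eOut n x := by cases x <;> rfl
  have e2 : FL n (embOut n y) = eOut n y := by cases y <;> rfl
  rw [show (pcomp n (pcomp n τ ρ) σ).r x y =
    (glue n (pcomp n τ ρ) σ).r (embOut n x) (embOut n y) from rfl, low_iff, e1, e2]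

lemma pcomp_right_star {n : ℕ} (τ ρ σ : Setoid (DVert n)) :
    pcomp n τ (pcomp n ρ σ) =
      pstar n (pcomp n (pcomp n (pstar n σ) (pstar n ρ)) (pstar n τ)) := by
  rw [pstar_pcomp, pstar_pstar, pstar_pcomp, pstar_pstar, pstar_pstar]

lemma pcomp_assoc {n : ℕ} (τ ρ σ : Setoid (DVert n)) :
    pcomp n (pcomp n τ ρ) σ = pcomp n τ (pcomp n ρ σ) := by
  apply Setoid.ext
  intro x y
  rw [pcomp_right_star]
  show _ ↔ (pcomp n (pcomp n (pstar n σ) (pstar n ρ)) (pstar n τ)).r x.swap y.swap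
  rw [show ((pcomp n (pcomp n τ ρ) σ) x y) = (pcomp n (pcomp n τ ρ) σ).r x y from rfl,
    out_iff, out_iff, gq_flip (pstar n σ) (pstar n ρ) (pstar n τ), pstar_pstar,
    pstar_pstar, pstar_pstar]
  have e1 : qflip n (eOut n x.swap) = eOut n x := by cases x <;> rfl
  have e2 : qflip n (eOut n y.swap) = eOut n y := by cases y <;> rfl
  rw [e1, e2]

lemma ccount_assoc {n : ℕ} (τ ρ σ : Setoid (DVert n)) :
    ccount n (pcomp n τ ρ) σ + ccount n τ ρ =
      ccount n τ (pcomp n ρ σ) + ccount n ρ σ := by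
  have h1 : ccount n τ (pcomp n ρ σ) =
      ccount n (pcomp n (pstar n σ) (pstar n ρ)) (pstar n τ) := by
    rw [ccount_star τ (pcomp n ρ σ), pstar_pcomp]
  have h2 : ccount n ρ σ = ccount n (pstar n σ) (pstar n ρ) := ccount_star ρ σ
  rw [h1, h2, count_left, count_left, Mgq_flip τ ρ σ]

lemma pmul_zero_left {n : ℕ} (δ : ℂ) (g : Setoid (DVert n) →₀ ℂ) : pmul n δ 0 g = 0 := by
  simp [pmul]

lemma pmul_zero_right {n : ℕ} (δ : ℂ) (f : Setoid (DVert n) →₀ ℂ) : pmul n δ f 0 = 0 := by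
  simp [pmul]

lemma pmul_single_single {n : ℕ} (δ : ℂ) (τ ρ : Setoid (DVert n)) (a b : ℂ) :
    pmul n δ (Finsupp.single τ a) (Finsupp.single ρ b) =
      Finsupp.single (pcomp n τ ρ) (δ ^ ccount n τ ρ * (a * b)) := by
  unfold pmul
  rw [Finsupp.sum_single_index (by simp), Finsupp.sum_single_index (by simp)]

lemma pmul_add_left {n : ℕ} (δ : ℂ) (f f' g : Setoid (DVert n) →₀ ℂ) :
    pmul n δ (f + f') g = pmul n δ f g + pmul n δ f' g := by
  unfold pmul
  rw [Finsupp.sum_add_index]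
  · intro τ _
    simp
  · intro τ _ a a'
    rw [← Finsupp.sum_add]
    congr 1
    ext ρ b
    rw [← Finsupp.single_add]
    congr 1
    ring

lemma pmul_add_right {n : ℕ} (δ : ℂ) (f g g' : Setoid (DVert n) →₀ ℂ) :
    pmul n δ f (g + g') = pmul n δ f g + pmul n δ f g' := by
  unfold pmul
  rw [← Finsupp.sum_add]
  congr 1
  ext τ a
  rw [Finsupp.sum_add_index]
  · intro ρ _
    simp
  · intro ρ _ b b'
    rw [← Finsupp.single_add]
    congr 1
    ring


/-- for nonzero `δ`, the product `τ·ρ = δ^{c(τ,ρ)} (τ∘ρ)` on the linear span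
of `Pₙ` is associative, making the partition algebra `𝐏ₙ(δ)` an associative algebra. -/
theorem partition_algebra_assoc (n : ℕ) (δ : ℂ) (hδ : δ ≠ 0)
    (f g h : Setoid (DVert n) →₀ ℂ) :
    pmul n δ (pmul n δ f g) h = pmul n δ f (pmul n δ g h) := by
  induction f using Finsupp.induction_linear with
  | zero => rw [pmul_zero_left, pmul_zero_left, pmul_zero_left]
  | add f1 f2 ih1 ih2 => rw [pmul_add_left, pmul_add_left, pmul_add_left, ih1, ih2]
  | single τ a =>
    induction g using Finsupp.induction_linear with
    | zero => rw [pmul_zero_right, pmul_zero_left, pmul_zero_right]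
    | add g1 g2 ih1 ih2 =>
        rw [pmul_add_right, pmul_add_left, pmul_add_left, pmul_add_right, ih1, ih2]
    | single ρ b =>
      induction h using Finsupp.induction_linear with
      | zero => rw [pmul_zero_right, pmul_zero_right, pmul_zero_right]
      | add h1 h2 ih1 ih2 =>
          rw [pmul_add_right, pmul_add_right, pmul_add_right, ih1, ih2]
      | single σ c =>
        rw [pmul_single_single, pmul_single_single, pmul_single_single,
          pmul_single_single, pcomp_assoc]
        congr 1
        rw [show δ ^ ccount n (pcomp n τ ρ) σ * (δ ^ ccount n τ ρ * (a * b) * c) =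
            δ ^ (ccount n (pcomp n τ ρ) σ + ccount n τ ρ) * (a * (b * c)) from by
          rw [pow_add]; ring, ccount_assoc, pow_add]
        ring


end
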